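/- If a regular language L over a finite alphabet does not have polynomial growth, then adh(L) is uncountable and contains uncountably many aperiodic infinite words. -/

import Mathlib

/-- `l` is a prefix of the infinite word `w`. -/
def IsPrefixOfInf {α : Type*} (l : List α) (w : ℕ → α) : Prop :=
  ∀ (i : ℕ) (h : i < l.length), l[i] = w i

/-- `b` is the image of the infinite word `a` under the morphism `γ`
(extended to infinite words by concatenation). -/
def IsInfImage {α β : Type*} (γ : α → List β) (a : ℕ → α) (b : ℕ → β) : Prop :=
  ∀ n : ℕ, IsPrefixOfInf (((List.range n).map a).flatMap γ) b

/-- `w = y · z^ω`. -/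
def UltPeriodicWith {α : Type*} (w : ℕ → α) (y z : List α) : Prop :=
  z ≠ [] ∧ ∀ m : ℕ, IsPrefixOfInf (y ++ (List.replicate m z).flatten) w

def UltimatelyPeriodic {α : Type*} (w : ℕ → α) : Prop :=
  ∃ y z : List α, UltPeriodicWith w y z

/-- `x` is a (finite, contiguous) factor of the infinite word `w`. -/
def InfFactorOf {α : Type*} (x : List α) (w : ℕ → α) : Prop :=
  ∃ i : ℕ, x = List.ofFn fun j : Fin x.length => w (i + j)

/-- adherence of a language -/
def Adherence {α : Type*} (L : Set (List α)) : Set (ℕ → α) :=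
  {x | ∀ n : ℕ, ∃ w ∈ L, (List.ofFn fun i : Fin n => x i) <+: w}

namespace Stmt10Aux

variable {α : Type*} {σ : Type*}

/-- A state is useful if it is reachable from the start and can reach an accepting state. -/
def UsefulSt (M : DFA α σ) (q : σ) : Prop :=
  (∃ u : List α, M.eval u = q) ∧ ∃ v : List α, M.evalFrom q v ∈ M.accept

open Classical in
/-- The (choice of a) loop of length `ℓ` at state `q`. -/
noncomputable def loopW (M : DFA α σ) (q : σ) (ℓ : ℕ) : List α :=
  if h : ∃ x : List α, x.length = ℓ ∧ M.evalFrom q x = q then h.choose else []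

lemma loopW_spec {M : DFA α σ} {q : σ} {ℓ : ℕ}
    (h : ∃ x : List α, x.length = ℓ ∧ M.evalFrom q x = q) :
    (loopW M q ℓ).length = ℓ ∧ M.evalFrom q (loopW M q ℓ) = q := by
  classical
  rw [loopW, dif_pos h]
  exact h.choose_spec

/-- Hypothesis: at useful states, equal-length loops are unique. -/
def UniqLoops (M : DFA α σ) : Prop :=
  ∀ q, UsefulSt M q → ∀ x y : List α, M.evalFrom q x = q → M.evalFrom q y = q →
    x.length = y.length → x = y

lemma loopW_eq {M : DFA α σ} (H : UniqLoops M) {q : σ} (hq : UsefulSt M q)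
    {x : List α} (hx : M.evalFrom q x = q) : loopW M q x.length = x := by
  have h : ∃ y : List α, y.length = x.length ∧ M.evalFrom q y = q := ⟨x, rfl, hx⟩
  obtain ⟨h1, h2⟩ := loopW_spec h
  exact H q hq _ x h2 hx (h1.symm ▸ rfl)

/-- Expand a skeleton word `r` and loop-length data `f` into a full word. -/
noncomputable def expandW (M : DFA α σ) : σ → List α → (σ → ℕ) → List α
  | p, [], f => loopW M p (f p)
  | p, a :: r, f => loopW M p (f p) ++ a :: expandW M (M.step p a) r f

lemma decomp [Fintype σ] (M : DFA α σ) (H : UniqLoops M) :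
    ∀ (n : ℕ) (w : List α) (p : σ) (S : Finset σ),
      w.length ≤ n →
      (∀ i ≤ w.length, UsefulSt M (M.evalFrom p (w.take i))) →
      (∀ i ≤ w.length, M.evalFrom p (w.take i) ∉ S) →
      ∃ (r : List α) (f : σ → ℕ),
        r.length + S.card ≤ Fintype.card σ ∧
        (∀ q, f q ≤ w.length) ∧
        ∀ g : σ → ℕ, (∀ q ∉ S, g q = f q) → expandW M p r g = w := by
  classical
  intro n
  induction n with
  | zero =>
    intro w p S hlen hU hS
    have hw : w = [] := List.length_eq_zero_iff.mp (Nat.le_zero.mp hlen)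
    subst hw
    have hpS : p ∉ S := by simpa using hS 0 (by simp)
    refine ⟨[], fun _ => 0, ?_, by simp, ?_⟩
    · simpa using Finset.card_le_card (Finset.subset_univ S) |>.trans (by simp)
    · intro g hg
      have hg0 : g p = 0 := hg p hpS
      show loopW M p (g p) = []
      rw [hg0]
      have := loopW_spec (M := M) (q := p) (ℓ := 0) ⟨[], rfl, by simp⟩
      exact List.length_eq_zero_iff.mp this.1
  | succ n ih =>
    intro w p S hlen hU hS
    have hpS : p ∉ S := by simpa using hS 0 (by simp)
    have hUp : UsefulSt M p := by simpa using hU 0 (by simp)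
    set P : ℕ → Prop := fun i => i ≤ w.length ∧ M.evalFrom p (w.take i) = p with hP
    have hP0 : P 0 := ⟨by simp, by simp⟩
    set j := Nat.findGreatest P w.length with hj
    have hPj : P j := Nat.findGreatest_spec (Nat.zero_le _) hP0
    obtain ⟨hjle, hjeval⟩ := hPj
    by_cases hcase : j = w.length
    · -- the whole word is a loop at p
      have hwl : M.evalFrom p w = p := by
        rw [← List.take_length (l := w), ← hcase]; exact hjeval
      have hloop : loopW M p w.length = w := loopW_eq H hUp hwl
      refine ⟨[], fun q => if q = p then w.length else 0, ?_, ?_, ?_⟩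
      · simpa using Finset.card_le_card (Finset.subset_univ S) |>.trans (by simp)
      · intro q; dsimp only; split <;> simp
      · intro g hg
        have : g p = w.length := by rw [hg p hpS]; simp
        show loopW M p (g p) = w
        rw [this, hloop]
    · have hjlt : j < w.length := lt_of_le_of_ne hjle hcase
      set a := w[j] with ha
      set w' := w.drop (j + 1) with hw'
      have hw'len : w'.length ≤ n := by
        simp only [hw', List.length_drop]; omega
      have hsplit : w.take j ++ a :: w' = w := by
        rw [ha, hw', List.getElem_cons_drop, List.take_append_drop]
      have hstep : M.evalFrom p (w.take (j + 1)) = M.step p a := by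
        have h1 : w.take (j + 1) = w.take j ++ [a] := by
          rw [ha]
          rw [← List.take_concat_get hjlt, List.concat_eq_append]
        rw [h1, DFA.evalFrom_append_singleton, hjeval]
      have hshift : ∀ i : ℕ, M.evalFrom (M.step p a) (w'.take i)
          = M.evalFrom p (w.take (j + 1 + i)) := by
        intro i
        rw [List.take_add, DFA.evalFrom_of_append, hstep]
      have hU' : ∀ i ≤ w'.length, UsefulSt M (M.evalFrom (M.step p a) (w'.take i)) := by
        intro i hi
        rw [hshift]
        exact hU _ (by simp only [hw', List.length_drop] at hi; omega)
      have hS' : ∀ i ≤ w'.length, M.evalFrom (M.step p a) (w'.take i) ∉ insert p S := by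
        intro i hi
        have hile : j + 1 + i ≤ w.length := by
          simp only [hw', List.length_drop] at hi; omega
        rw [hshift]
        simp only [Finset.mem_insert, not_or]
        constructor
        · intro heq
          exact Nat.findGreatest_is_greatest (by omega : j < j + 1 + i) hile ⟨hile, heq⟩
        · exact hS _ hile
      obtain ⟨r', f', hcard, hle, hexp⟩ := ih w' (M.step p a) (insert p S) hw'len hU' hS'
      have hloopj : loopW M p j = w.take j := by
        have h := loopW_eq H hUp hjeval
        rwa [List.length_take, min_eq_left hjle] at h
      refine ⟨a :: r', fun q => if q = p then j else f' q, ?_, ?_, ?_⟩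
      · have : (insert p S).card = S.card + 1 := Finset.card_insert_of_notMem hpS
        simp only [List.length_cons]
        omega
      · intro q
        dsimp only
        split
        · omega
        · exact (hle q).trans (by simp only [hw', List.length_drop]; omega)
      · intro g hg
        have hgp : g p = j := by rw [hg p hpS]; simp
        have hrest : expandW M (M.step p a) r' g = w' := by
          refine hexp g fun q hq => ?_
          have hqS : q ∉ S := fun h => hq (Finset.mem_insert_of_mem h)
          have hqp : q ≠ p := fun h => hq (h ▸ Finset.mem_insert_self p S)
          rw [hg q hqS]; dsimp only; rw [if_neg hqp]
        show loopW M p (g p) ++ a :: expandW M (M.step p a) r' g = w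
        rw [hgp, hloopj, hrest, hsplit]


lemma poly_of_uniq {α : Type*} [Fintype α] {σ : Type*} [Fintype σ] (M : DFA α σ)
    (H : UniqLoops M) :
    ∃ k C : ℕ, ∀ n : ℕ,
      {w ∈ (M.accepts : Set (List α)) | w.length = n}.ncard ≤ C * (n + 1) ^ k := by
  classical
  set N := Fintype.card σ with hN
  set SF : Finset (List α) := (List.finite_length_le α N).toFinset with hSF
  refine ⟨N, SF.card, fun n => ?_⟩
  set F : Finset (List α) :=
    (SF ×ˢ (Finset.univ : Finset (σ → Fin (n + 1)))).image
      (fun rf => expandW M M.start rf.1 (fun q => (rf.2 q : ℕ))) with hF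
  have hsub : {w ∈ (M.accepts : Set (List α)) | w.length = n} ⊆ ↑F := by
    rintro w ⟨hw, hlen⟩
    have hwacc : M.eval w ∈ M.accept := hw
    have hU : ∀ i ≤ w.length, UsefulSt M (M.evalFrom M.start (w.take i)) := by
      intro i hi
      refine ⟨⟨w.take i, rfl⟩, ⟨w.drop i, ?_⟩⟩
      rw [← DFA.evalFrom_of_append, List.take_append_drop]
      exact hwacc
    obtain ⟨r, f, hcard, hfle, hexp⟩ := decomp M H w.length w M.start ∅ le_rfl hU (by simp)
    have hw' : expandW M M.start r f = w := hexp f (fun _ _ => rfl)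
    have hrS : r ∈ SF := by
      rw [hSF, Set.Finite.mem_toFinset]
      simpa using hcard
    refine Finset.mem_coe.2 (Finset.mem_image.2
      ⟨(r, fun q => ⟨f q, by have := hfle q; omega⟩), ?_, ?_⟩)
    · exact Finset.mem_product.2 ⟨hrS, Finset.mem_univ _⟩
    · simpa using hw'
  calc {w ∈ (M.accepts : Set (List α)) | w.length = n}.ncard
      ≤ (↑F : Set (List α)).ncard := Set.ncard_le_ncard hsub F.finite_toSet
    _ = F.card := Set.ncard_coe_finset F
    _ ≤ (SF ×ˢ (Finset.univ : Finset (σ → Fin (n + 1)))).card := Finset.card_image_le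
    _ = SF.card * (n + 1) ^ N := by
        rw [Finset.card_product, Finset.card_univ, Fintype.card_fun, Fintype.card_fin]

lemma not_countable_funBool : ¬ Countable (ℕ → Bool) := by
  intro h
  have : Countable (Set ℕ) := by
    classical
    exact Function.Injective.countable (f := fun (s : Set ℕ) (n : ℕ) => decide (n ∈ s))
      (fun s t hst => by ext n; simpa using congrFun hst n)
  obtain ⟨f, hf⟩ := exists_surjective_nat (Set ℕ)
  exact Function.cantor_surjective f hf

section Construction

variable {α : Type*} {σ : Type*} (M : DFA α σ) (q : σ)
variable (x y : List α)

/-- the block corresponding to a boolean -/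
def bblock (b : Bool) : List α := if b then x else y

/-- concatenation of the first `m` blocks of the sequence `s` -/
def blocksOf (s : ℕ → Bool) (m : ℕ) : List α :=
  ((List.range m).map (fun i => bblock x y (s i))).flatten

lemma blocksOf_succ (s : ℕ → Bool) (m : ℕ) :
    blocksOf x y s (m + 1) = blocksOf x y s m ++ bblock x y (s m) := by
  simp [blocksOf, List.range_succ]

lemma IsPrefix.getD_stable {l l' : List α} (h : l <+: l') {i : ℕ} (hi : i < l.length) (d : α) :
    l'.getD i d = l.getD i d := by
  obtain ⟨t, rfl⟩ := h
  exact List.getD_append l t d i hi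

variable (hlen : x.length = y.length) (hxne : x ≠ [])

section
include hlen

lemma bblock_length (b : Bool) : (bblock x y b).length = x.length := by
  cases b <;> simp [bblock, hlen]

lemma blocksOf_length (s : ℕ → Bool) (m : ℕ) :
    (blocksOf x y s m).length = m * x.length := by
  induction m with
  | zero => simp [blocksOf]
  | succ m ih =>
    rw [blocksOf_succ, List.length_append, ih, bblock_length x y hlen]
    ring

set_option linter.unusedSectionVars false in
lemma blocksOf_prefix (s : ℕ → Bool) {m m' : ℕ} (h : m ≤ m') :
    blocksOf x y s m <+: blocksOf x y s m' := by
  induction m' with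
  | zero => simp_all
  | succ m' ih =>
    rcases Nat.lt_or_ge m (m' + 1) with h' | h'
    · exact (ih (by omega)).trans (by rw [blocksOf_succ]; exact List.prefix_append _ _)
    · have : m = m' + 1 := by omega
      subst this; exact List.prefix_refl _

end

variable (hx : M.evalFrom q x = q) (hy : M.evalFrom q y = q)

section
include hx hy

lemma bblock_loop (b : Bool) : M.evalFrom q (bblock x y b) = q := by
  cases b <;> simpa [bblock]

lemma blocksOf_loop (s : ℕ → Bool) (m : ℕ) :
    M.evalFrom q (blocksOf x y s m) = q := by
  induction m with
  | zero => simp [blocksOf]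
  | succ m ih =>
    rw [blocksOf_succ, DFA.evalFrom_of_append, ih, bblock_loop M q x y hx hy]

end

end Construction

section Main

variable {α : Type*} {σ : Type*}

lemma main_construction (M : DFA α σ) (q : σ) (hq : UsefulSt M q)
    (x y : List α) (hx : M.evalFrom q x = q) (hy : M.evalFrom q y = q)
    (hlen : x.length = y.length) (hne : x ≠ y) (hxne : x ≠ []) :
    ∃ W : (ℕ → Bool) → (ℕ → α), Function.Injective W ∧
      ∀ s, W s ∈ Adherence (M.accepts : Set (List α)) := by
  classical
  obtain ⟨⟨u, hu⟩, ⟨v, hv⟩⟩ := hq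
  set d : α := x.head hxne with hd
  set L0 := x.length with hL0
  have hL0pos : 0 < L0 := List.length_pos_iff.2 hxne
  set full : (ℕ → Bool) → ℕ → List α := fun s m => u ++ blocksOf x y s m with hfull
  have hfull_len : ∀ s m, (full s m).length = u.length + m * L0 := by
    intro s m; simp [hfull, blocksOf_length x y hlen]; exact Or.inl hL0.symm
  have hfull_prefix : ∀ s {m m'}, m ≤ m' → full s m <+: full s m' := by
    intro s m m' h
    obtain ⟨t, ht⟩ := blocksOf_prefix x y hlen s h
    exact ⟨t, by rw [hfull, List.append_assoc, ht]⟩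
  set W : (ℕ → Bool) → ℕ → α := fun s n => (full s (n + 1)).getD n d with hW
  have hWstable : ∀ s n m, n < (full s m).length → W s n = (full s m).getD n d := by
    intro s n m hn
    have h1 : n < (full s (n + 1)).length := by
      rw [hfull_len]
      calc n < n + 1 := by omega
        _ ≤ u.length + (n+1) * L0 := by nlinarith
    show (full s (n + 1)).getD n d = (full s m).getD n d
    rcases le_total m (n + 1) with h | h
    · exact IsPrefix.getD_stable (hfull_prefix s h) hn d
    · exact (IsPrefix.getD_stable (hfull_prefix s h) h1 d).symm
  have hofFn : ∀ s n, (List.ofFn fun i : Fin n => W s i) = (full s n).take n := by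
    intro s n
    have hn : n ≤ (full s n).length := by
      rw [hfull_len]; nlinarith
    apply List.ext_getElem
    · simp [List.length_take, hn]
    · intro i h1 h2
      simp only [List.getElem_ofFn, List.getElem_take]
      have hi : i < n := by simpa using h1
      have hilen : i < (full s n).length := by omega
      rw [hWstable s i n hilen, List.getD_eq_getElem _ _ hilen]
  refine ⟨W, ?_, ?_⟩
  · -- injectivity
    intro s t hst
    funext i
    by_contra hib
    -- find a disagreement index inside the blocks
    have hxy : ∃ k, k < L0 ∧ x.getD k d ≠ y.getD k d := by
      by_contra hk
      push_neg at hk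
      refine hne (List.ext_getElem hlen fun n h1 h2 => ?_)
      have := hk n (by simpa [hL0] using h1)
      rwa [List.getD_eq_getElem _ _ h1, List.getD_eq_getElem _ _ h2] at this
    obtain ⟨k, hkL0, hkne⟩ := hxy
    set pos := u.length + (i * L0 + k) with hpos
    have hkey : ∀ s' : ℕ → Bool, W s' pos = (bblock x y (s' i)).getD k d := by
      intro s'
      have hposlt : pos < (full s' (i + 1)).length := by
        rw [hfull_len, hpos]
        have : i * L0 + k < (i + 1) * L0 := by nlinarith
        omega
      rw [hWstable s' pos (i + 1) hposlt]
      show (u ++ blocksOf x y s' (i + 1)).getD pos d = _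
      have hbl : (blocksOf x y s' i).length = i * L0 := by
        rw [blocksOf_length x y hlen, ← hL0]
      rw [hpos, List.getD_append_right u _ d _ (by omega), Nat.add_sub_cancel_left,
        blocksOf_succ, List.getD_append_right _ _ d _ (by rw [hbl]; omega), hbl,
        Nat.add_sub_cancel_left]
    have heq : (bblock x y (s i)).getD k d = (bblock x y (t i)).getD k d := by
      rw [← hkey s, ← hkey t, hst]
    cases hsi : s i <;> cases hti : t i <;> simp only [hsi, hti, bblock] at heq hib ⊢ <;>
        simp_all
  · -- adherence
    intro s n
    refine ⟨full s n ++ v, ?_, ?_⟩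
    · show M.eval (full s n ++ v) ∈ M.accept
      show M.evalFrom M.start (u ++ blocksOf x y s n ++ v) ∈ M.accept
      rw [DFA.evalFrom_of_append, DFA.evalFrom_of_append]
      have hu' : M.evalFrom M.start u = q := hu
      rw [hu', blocksOf_loop M q x y hx hy]
      exact hv
    · rw [hofFn]
      exact (List.take_prefix _ _).trans (List.prefix_append _ _)

end Main
lemma countable_UP {α : Type*} [Countable α] :
    {w : ℕ → α | UltimatelyPeriodic w}.Countable := by
  have hsub : {w : ℕ → α | UltimatelyPeriodic w} ⊆
      ⋃ p : List α × List α, {w | UltPeriodicWith w p.1 p.2} := by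
    rintro w ⟨y, z, h⟩
    exact Set.mem_iUnion.2 ⟨(y, z), h⟩
  refine Set.Countable.mono hsub (Set.countable_iUnion fun p => Set.Subsingleton.countable ?_)
  rintro w1 ⟨hz, h1⟩ w2 ⟨-, h2⟩
  funext n
  have hzlen : 1 ≤ p.2.length := List.length_pos_iff.2 hz
  have hlen : n < (p.1 ++ (List.replicate (n + 1) p.2).flatten).length := by
    have : (List.replicate (n + 1) p.2).flatten.length = (n + 1) * p.2.length := by
      simp [List.length_flatten, List.map_replicate, List.sum_replicate, smul_eq_mul]
    rw [List.length_append, this]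
    nlinarith
  rw [← h1 (n + 1) n hlen, ← h2 (n + 1) n hlen]

end Stmt10Aux

theorem stmt10 {α : Type*} [Fintype α] (L : Language α) (hreg : L.IsRegular)
    (hnotpoly : ¬ ∃ k C : ℕ, ∀ n : ℕ,
      {w ∈ (L : Set (List α)) | w.length = n}.ncard ≤ C * (n + 1) ^ k) :
    ¬ (Adherence (L : Set (List α))).Countable ∧
      ¬ {x ∈ Adherence (L : Set (List α)) | ¬ UltimatelyPeriodic x}.Countable := by
  classical
  obtain ⟨σ, hfin, M, hM⟩ := hreg
  haveI := hfin
  subst hM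
  by_cases hA : ∃ q, Stmt10Aux.UsefulSt M q ∧ ∃ x y : List α,
      M.evalFrom q x = q ∧ M.evalFrom q y = q ∧ x.length = y.length ∧ x ≠ y ∧ x ≠ []
  · obtain ⟨q, hq, x, y, hx, hy, hlen', hne, hxne⟩ := hA
    obtain ⟨W, hWinj, hWadh⟩ := Stmt10Aux.main_construction M q hq x y hx hy hlen' hne hxne
    have hrange : Set.range W ⊆ Adherence (M.accepts : Set (List α)) := by
      rintro _ ⟨s, rfl⟩; exact hWadh s
    have hkill : ¬ (Set.range W).Countable := by
      intro h1
      haveI := h1.to_subtype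
      exact Stmt10Aux.not_countable_funBool
        (Countable.of_equiv _ (Equiv.ofInjective W hWinj).symm)
    constructor
    · intro hc
      exact hkill (hc.mono hrange)
    · intro hc
      have hUP : {w : ℕ → α | UltimatelyPeriodic w}.Countable := Stmt10Aux.countable_UP
      have h2 : (Set.range W \ {w : ℕ → α | UltimatelyPeriodic w}).Countable := by
        refine hc.mono ?_
        rintro w ⟨hw1, hw2⟩
        exact ⟨hrange hw1, hw2⟩
      refine hkill ((h2.union hUP).mono fun w hw => ?_)
      by_cases h : w ∈ {w : ℕ → α | UltimatelyPeriodic w}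
      · exact Set.mem_union_right _ h
      · exact Set.mem_union_left _ ⟨hw, h⟩
  · exfalso
    apply hnotpoly
    have H : Stmt10Aux.UniqLoops M := by
      intro q hq x y hx hy hlen'
      by_contra hne
      refine hA ⟨q, hq, ?_⟩
      rcases eq_or_ne x [] with rfl | hxne
      · exfalso
        apply hne
        have : y.length = 0 := hlen'.symm
        rw [List.length_eq_zero_iff.mp this]
      · exact ⟨x, y, hx, hy, hlen', hne, hxne⟩
    exact Stmt10Aux.poly_of_uniq M H
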